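/- Let A and B be CM orders (orders with involutive automorphism and positive-definite form x ↦ tr(x·x̄)). Then the tensor product A ⊗ B, equipped with the involution (a ⊗ b)‾ = ā ⊗ b̄, is a CM order; in particular x ↦ tr(x·x̄) on A ⊗ B is positive definite. -/

import Mathlib

open TensorProduct

/-- The trace of the multiplication-by-`a` endomorphism. -/
noncomputable def trform {O : Type*} [CommRing O] (a : O) : ℤ :=
  LinearMap.trace ℤ O (LinearMap.mulLeft ℤ a)

open Matrix Kronecker in
lemma posDef_of_psd_det_ne_zero {ι : Type*} [Fintype ι] [DecidableEq ι] {M : Matrix ι ι ℝ}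
    (h : M.PosSemidef) (hdet : M.det ≠ 0) : M.PosDef := by
  refine PosDef.of_dotProduct_mulVec_pos h.1 fun x hx => ?_
  rcases lt_or_eq_of_le (h.dotProduct_mulVec_nonneg x) with hlt | heq
  · exact hlt
  · exfalso
    have h0 : M *ᵥ x = 0 := (h.dotProduct_mulVec_zero_iff x).mp heq.symm
    have hinj : Function.Injective (M.mulVec) :=
      mulVec_injective_iff_isUnit.mpr ((isUnit_iff_isUnit_det M).mpr hdet.isUnit)
    exact hx (hinj (by simpa using h0))

open Matrix Kronecker in
lemma posDef_kronecker {ι κ : Type*} [Fintype ι] [Fintype κ] [DecidableEq ι] [DecidableEq κ]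
    {M : Matrix ι ι ℝ} {N : Matrix κ κ ℝ} (hM : M.PosDef) (hN : N.PosDef) :
    (M ⊗ₖ N).PosDef := by
  have hMs := hM.posSemidef
  have hNs := hN.posSemidef
  have hpsd : (M ⊗ₖ N).PosSemidef := hMs.kronecker hNs
  refine posDef_of_psd_det_ne_zero hpsd ?_
  rw [det_kronecker]
  exact ne_of_gt (mul_pos (pow_pos hM.det_pos _) (pow_pos hN.det_pos _))

open Matrix in
lemma rat_pd_of_int_pd {ι : Type*} [Fintype ι] [DecidableEq ι] (G : Matrix ι ι ℤ)
    (hpd : ∀ v : ι → ℤ, v ≠ 0 → 0 < v ⬝ᵥ G *ᵥ v) :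
    ∀ v : ι → ℚ, v ≠ 0 → 0 < v ⬝ᵥ (G.map (Int.cast : ℤ → ℚ)) *ᵥ v := by
  intro v hv
  set Gq := G.map (Int.cast : ℤ → ℚ) with hGq
  set n : ℤ := ∏ i, ((v i).den : ℤ) with hn
  have hnpos : 0 < n := Finset.prod_pos fun i _ => by exact_mod_cast (v i).pos
  set w : ι → ℤ := fun i => (n / ((v i).den : ℤ)) * (v i).num with hw
  have hwq : ∀ i, ((w i : ℚ)) = (n : ℚ) * v i := by
    intro i
    obtain ⟨k, hk⟩ : ((v i).den : ℤ) ∣ n := Finset.dvd_prod_of_mem _ (Finset.mem_univ i)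
    have hden : ((v i).den : ℚ) ≠ 0 := by exact_mod_cast (v i).den_ne_zero
    have hnum : ((v i).num : ℚ) = v i * ((v i).den : ℚ) := by
      exact (div_eq_iff hden).mp (Rat.num_div_den (v i))
    have hdiv : n / ((v i).den : ℤ) = k := by
      rw [hk]; exact Int.mul_ediv_cancel_left _ (by exact_mod_cast (v i).den_ne_zero)
    have hwk : w i = k * (v i).num := by rw [hw]; simp only; rw [hdiv]
    rw [hwk]; push_cast [hnum, hk]; ring
  have hwvec : (fun i => ((w i : ℚ))) = (n : ℚ) • v := by
    funext i; simp [hwq i, Pi.smul_apply, smul_eq_mul]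
  have hw0 : w ≠ 0 := by
    obtain ⟨i, hi⟩ := Function.ne_iff.mp hv
    intro h
    apply hi
    have := hwq i
    rw [h] at this
    simp only [Pi.zero_apply, Int.cast_zero] at this
    have hn0 : (n : ℚ) ≠ 0 := by exact_mod_cast hnpos.ne'
    exact (mul_eq_zero.mp this.symm).resolve_left hn0
  have hcast : ((w ⬝ᵥ G *ᵥ w : ℤ) : ℚ) = (fun i => ((w i : ℚ))) ⬝ᵥ Gq *ᵥ (fun i => ((w i : ℚ))) := by
    simp only [dotProduct, mulVec, Matrix.map_apply, hGq]
    push_cast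
    rfl
  have hpos : (0:ℚ) < (fun i => ((w i : ℚ))) ⬝ᵥ Gq *ᵥ (fun i => ((w i : ℚ))) := by
    rw [← hcast]; exact_mod_cast hpd w hw0
  rw [hwvec, smul_dotProduct, mulVec_smul, dotProduct_smul, smul_eq_mul, smul_eq_mul] at hpos
  have hnq : (0:ℚ) < (n:ℚ) := by exact_mod_cast hnpos
  nlinarith [hpos, mul_pos hnq hnq]

open Matrix in
lemma real_posDef_of_int_pd {ι : Type*} [Fintype ι] [DecidableEq ι] (G : Matrix ι ι ℤ)
    (hsymm : Gᵀ = G) (hpd : ∀ v : ι → ℤ, v ≠ 0 → 0 < v ⬝ᵥ G *ᵥ v) :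
    (G.map (Int.cast : ℤ → ℝ)).PosDef := by
  classical
  set M := G.map (Int.cast : ℤ → ℝ) with hM
  have hq := rat_pd_of_int_pd G hpd
  have hherm : M.IsHermitian := by
    have : Mᴴ = Mᵀ := by
      ext i j; simp [conjTranspose_apply, transpose_apply]
    rw [Matrix.IsHermitian, this, hM, ← Matrix.transpose_map, hsymm]
  have hcont : Continuous (fun x : ι → ℝ => x ⬝ᵥ M *ᵥ x) := by
    unfold dotProduct mulVec
    exact continuous_finset_sum _ fun i _ => (continuous_apply i).mul
      (continuous_finset_sum _ fun j _ => (continuous_const.mul (continuous_apply j)))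
  have hratpt : ∀ v : ι → ℚ, 0 ≤ (fun i => ((v i : ℝ))) ⬝ᵥ M *ᵥ (fun i => ((v i : ℝ))) := by
    intro v
    have hcast : ((v ⬝ᵥ (G.map (Int.cast : ℤ → ℚ)) *ᵥ v : ℚ) : ℝ)
        = (fun i => ((v i : ℝ))) ⬝ᵥ M *ᵥ (fun i => ((v i : ℝ))) := by
      simp only [dotProduct, mulVec, Matrix.map_apply, hM]
      push_cast
      rfl
    rw [← hcast]
    rcases eq_or_ne v 0 with rfl | hv
    · simp
    · exact_mod_cast (hq v hv).le
  have hnonneg : ∀ x : ι → ℝ, 0 ≤ x ⬝ᵥ M *ᵥ x := by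
    have hdense : Dense {x : ι → ℝ | ∀ i, x i ∈ Set.range ((↑) : ℚ → ℝ)} := by
      have h := dense_pi (α := fun _ : ι => ℝ) (s := fun _ => Set.range ((↑) : ℚ → ℝ))
        Set.univ (fun i _ => Rat.denseRange_cast)
      convert h using 1
      ext x; simp [Set.mem_pi]
    have hclosed : IsClosed {x : ι → ℝ | 0 ≤ x ⬝ᵥ M *ᵥ x} :=
      isClosed_Ici.preimage hcont
    have hsub : {x : ι → ℝ | ∀ i, x i ∈ Set.range ((↑) : ℚ → ℝ)}
        ⊆ {x : ι → ℝ | 0 ≤ x ⬝ᵥ M *ᵥ x} := by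
      intro x hx
      choose v hv using hx
      have : x = fun i => ((v i : ℝ)) := by funext i; exact (hv i).symm
      rw [this]
      exact hratpt v
    intro x
    exact hclosed.closure_subset_iff.mpr hsub (hdense x)
  have hdet : M.det ≠ 0 := by
    have hGdet : G.det ≠ 0 := by
      intro h
      obtain ⟨v, hv0, hv⟩ := (Matrix.exists_mulVec_eq_zero_iff.mpr h)
      have := hpd v hv0
      rw [hv] at this
      simp at this
    have : M.det = ((G.det : ℤ) : ℝ) := by
      rw [hM]
      exact (RingHom.map_det (Int.castRingHom ℝ) G).symm
    rw [this]
    exact_mod_cast hGdet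
  refine posDef_of_psd_det_ne_zero (PosSemidef.of_dotProduct_mulVec_nonneg hherm fun x => by simpa using hnonneg x) hdet

noncomputable def trformL (O : Type*) [CommRing O] : O →ₗ[ℤ] ℤ :=
  (LinearMap.trace ℤ O).comp (LinearMap.mul ℤ O)

lemma trformL_apply {O : Type*} [CommRing O] (a : O) : trformL O a = trform a := by
  unfold trformL trform
  simp only [LinearMap.comp_apply]
  congr 1

lemma trform_ringEquiv {O : Type*} [CommRing O] (σ : O ≃+* O) (x : O) :
    trform (σ x) = trform x := by
  let e : O ≃ₗ[ℤ] O := σ.toAddEquiv.toIntLinearEquiv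
  have h : LinearMap.mulLeft ℤ (σ x) = e.conj (LinearMap.mulLeft ℤ x) := by
    ext y
    simp only [LinearMap.mulLeft_apply, LinearEquiv.conj_apply, LinearMap.comp_apply,
      LinearEquiv.coe_coe]
    show σ x * y = e (x * e.symm y)
    have : e.symm y = σ.symm y := rfl
    rw [this]
    show σ x * y = σ (x * σ.symm y)
    rw [map_mul, RingEquiv.apply_symm_apply]
  unfold trform
  rw [h, LinearMap.trace_conj']

lemma trform_symm {O : Type*} [CommRing O] (σ : O ≃+* O) (h2 : ∀ x, σ (σ x) = x)
    (x y : O) : trform (x * σ y) = trform (y * σ x) := by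
  rw [← trform_ringEquiv σ (x * σ y), map_mul, h2, mul_comm]

lemma mulLeft_tmul {A B : Type*} [CommRing A] [CommRing B] (a : A) (b : B) :
    LinearMap.mulLeft ℤ (a ⊗ₜ[ℤ] b) =
      TensorProduct.map (LinearMap.mulLeft ℤ a) (LinearMap.mulLeft ℤ b) := by
  apply TensorProduct.ext'
  intro x y
  exact Algebra.TensorProduct.tmul_mul_tmul a x b y

lemma trform_tmul_mul {A B : Type*} [CommRing A] [CommRing B]
    [Module.Free ℤ A] [Module.Finite ℤ A] [Module.Free ℤ B] [Module.Finite ℤ B]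
    (a a' : A) (b b' : B) :
    trform ((a ⊗ₜ[ℤ] b) * (a' ⊗ₜ[ℤ] b')) = trform (a * a') * trform (b * b') := by
  rw [Algebra.TensorProduct.tmul_mul_tmul]
  unfold trform
  rw [mulLeft_tmul]
  exact LinearMap.trace_tensorProduct' _ _

lemma gram_expand {O : Type*} [CommRing O] {ι : Type*} [Fintype ι]
    (e : ι → O) (f : ι → O) (v : ι → ℤ) :
    trform ((∑ i, v i • e i) * (∑ k, v k • f k))
      = ∑ i, ∑ k, (v i * v k) * trform (e i * f k) := by
  rw [Finset.sum_mul_sum]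
  rw [← trformL_apply, map_sum]
  refine Finset.sum_congr rfl fun i _ => ?_
  rw [map_sum]
  refine Finset.sum_congr rfl fun k _ => ?_
  rw [smul_mul_smul_comm, map_zsmul, smul_eq_mul, trformL_apply]

open Matrix in
lemma gram_pd {O : Type*} [CommRing O] {ι : Type*} [Fintype ι]
    (bO : Module.Basis ι ℤ O) (σ : O ≃+* O)
    (h : ∀ x : O, x ≠ 0 → 0 < trform (x * σ x)) (v : ι → ℤ) (hv : v ≠ 0) :
    0 < v ⬝ᵥ (Matrix.of fun i k => trform (bO i * σ (bO k))) *ᵥ v := by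
  set x : O := ∑ i, v i • bO i with hx
  have hx0 : x ≠ 0 := by
    intro h0
    apply hv
    funext i
    exact Fintype.linearIndependent_iff.mp bO.linearIndependent v h0 i
  have hσx : σ x = ∑ k, v k • σ (bO k) := by
    rw [hx, map_sum]
    exact Finset.sum_congr rfl fun k _ => map_zsmul σ _ _
  have key : trform (x * σ x) = ∑ i, ∑ k, (v i * v k) * trform (bO i * σ (bO k)) := by
    rw [hx, hσx]
    exact gram_expand _ _ _
  have := h x hx0
  rw [key] at this
  convert this using 1
  simp only [dotProduct, mulVec, Matrix.of_apply]
  refine Finset.sum_congr rfl fun i _ => ?_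
  rw [Finset.mul_sum]
  exact Finset.sum_congr rfl fun k _ => by ring

/-- The tensor product of two CM orders, with the involution `(a ⊗ b)‾ = ā ⊗ b̄`,
is again a CM order: the involution is involutive and `x ↦ tr (x * x̄)` is
positive definite. -/
theorem tensor_product_of_cm_orders_is_cm {A B : Type*} [CommRing A] [CommRing B]
    [Module.Free ℤ A] [Module.Finite ℤ A] [Module.Free ℤ B] [Module.Finite ℤ B]
    (σA : A ≃+* A) (σB : B ≃+* B)
    (hA2 : ∀ x : A, σA (σA x) = x) (hB2 : ∀ x : B, σB (σB x) = x)
    (hA : ∀ x : A, x ≠ 0 → 0 < trform (x * σA x))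
    (hB : ∀ x : B, x ≠ 0 → 0 < trform (x * σB x)) :
    ∀ τ : (A ⊗[ℤ] B) ≃+* (A ⊗[ℤ] B),
      (∀ (a : A) (b : B), τ (a ⊗ₜ[ℤ] b) = σA a ⊗ₜ[ℤ] σB b) →
      (∀ z : A ⊗[ℤ] B, τ (τ z) = z) ∧
        ∀ z : A ⊗[ℤ] B, z ≠ 0 → 0 < trform (z * τ z) := by
  intro τ hτ
  classical
  open Matrix Kronecker in
  refine ⟨?_, ?_⟩
  · intro z
    induction z using TensorProduct.induction_on with
    | zero => simp
    | tmul a b => rw [hτ a b, hτ, hA2, hB2]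
    | add x y hx hy => rw [map_add, map_add, hx, hy]
  · intro z hz
    set ι := Module.Free.ChooseBasisIndex ℤ A with hι
    set κ := Module.Free.ChooseBasisIndex ℤ B with hκ
    set bA : Module.Basis ι ℤ A := Module.Free.chooseBasis ℤ A with hbA
    set bB : Module.Basis κ ℤ B := Module.Free.chooseBasis ℤ B with hbB
    set b : Module.Basis (ι × κ) ℤ (A ⊗[ℤ] B) := bA.tensorProduct bB with hb
    set GA : Matrix ι ι ℤ := Matrix.of fun i k => trform (bA i * σA (bA k)) with hGAdef
    set GB : Matrix κ κ ℤ := Matrix.of fun j l => trform (bB j * σB (bB l)) with hGBdef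
    set c : ι × κ → ℤ := fun p => b.repr z p with hc
    have hc0 : c ≠ 0 := by
      intro h
      apply hz
      rw [← b.sum_repr z]
      refine Finset.sum_eq_zero fun p _ => ?_
      have : c p = 0 := congrFun h p
      rw [show b.repr z p = c p from rfl, this, zero_smul]
    have hbp : ∀ p : ι × κ, b p = bA p.1 ⊗ₜ[ℤ] bB p.2 := by
      rintro ⟨i, j⟩
      exact Module.Basis.tensorProduct_apply bA bB i j
    have hzs : z = ∑ p, c p • b p := (b.sum_repr z).symm
    have hτz : τ z = ∑ p, c p • (σA (bA p.1) ⊗ₜ[ℤ] σB (bB p.2)) := by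
      conv_lhs => rw [hzs]
      rw [map_sum]
      exact Finset.sum_congr rfl fun p _ => by rw [map_zsmul, hbp p, hτ]
    have expand : trform (z * τ z)
        = ∑ p : ι × κ, ∑ q : ι × κ, (c p * c q) * (GA p.1 q.1 * GB p.2 q.2) := by
      conv_lhs => rw [hτz, hzs]
      rw [gram_expand]
      refine Finset.sum_congr rfl fun p _ => Finset.sum_congr rfl fun q _ => ?_
      congr 1
      rw [hbp p, trform_tmul_mul]
      rfl
    have hdot : trform (z * τ z) = c ⬝ᵥ (GA ⊗ₖ GB) *ᵥ c := by
      rw [expand]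
      simp only [dotProduct, mulVec, kroneckerMap_apply]
      refine Finset.sum_congr rfl fun p _ => ?_
      rw [Finset.mul_sum]
      exact Finset.sum_congr rfl fun q _ => by ring
    have hGApd : ∀ v : ι → ℤ, v ≠ 0 → 0 < v ⬝ᵥ GA *ᵥ v := fun v hv => gram_pd bA σA hA v hv
    have hGBpd : ∀ v : κ → ℤ, v ≠ 0 → 0 < v ⬝ᵥ GB *ᵥ v := fun v hv => gram_pd bB σB hB v hv
    have hGAsymm : GAᵀ = GA := by
      ext i k
      exact trform_symm σA hA2 (bA k) (bA i)
    have hGBsymm : GBᵀ = GB := by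
      ext j l
      exact trform_symm σB hB2 (bB l) (bB j)
    have hMA := real_posDef_of_int_pd GA hGAsymm hGApd
    have hMB := real_posDef_of_int_pd GB hGBsymm hGBpd
    have hK := posDef_kronecker hMA hMB
    have hmapk : (GA ⊗ₖ GB).map (Int.cast : ℤ → ℝ)
        = (GA.map (Int.cast : ℤ → ℝ)) ⊗ₖ (GB.map (Int.cast : ℤ → ℝ)) := by
      ext p q
      simp [kroneckerMap_apply, Matrix.map_apply]
    have hcR : (fun p : ι × κ => ((c p : ℝ))) ≠ 0 := by
      intro h
      apply hc0
      funext p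
      have := congrFun h p
      simp only [Pi.zero_apply] at this
      exact_mod_cast this
    have hpos := hK.dotProduct_mulVec_pos hcR
    have hcast : ((c ⬝ᵥ (GA ⊗ₖ GB) *ᵥ c : ℤ) : ℝ)
        = (fun p => ((c p : ℝ))) ⬝ᵥ ((GA ⊗ₖ GB).map (Int.cast : ℤ → ℝ)) *ᵥ (fun p => ((c p : ℝ))) := by
      simp only [dotProduct, mulVec, Matrix.map_apply]
      push_cast
      rfl
    rw [hdot]
    have hfin : (0:ℝ) < ((c ⬝ᵥ (GA ⊗ₖ GB) *ᵥ c : ℤ) : ℝ) := by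
      rw [hcast, hmapk]
      simpa using hpos
    exact_mod_cast hfin
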